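/- arXiv:0904.2876 — 4 statements merged into one kernel-verified Lean document; each statement's English description precedes it below -/
import Mathlib

section
/- Let T ∈ M_k(ℂ) be strictly upper triangular (T_{ij} = 0 for i ≥ j), let λ₁,…,λ_k ∈ ℂ, and set D = diag(λ₁,…,λ_k). Let p be a polynomial with p(λ₁) = 1 and p(λ_i) = 0 for 2 ≤ i ≤ k, and suppose moreover that T E_{11} = 0 and E_{11} T = 0 (i.e., the first row and column of T vanish). Then (p(D + T))^k has (1,1)-entry equal to 1, and in fact p(D+T) = E_{11} + T' where T' is strictly upper triangular with vanishing first row and column, so that (p(D+T))^k = E_{11}. -/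
open Matrix Polynomial

/-- The functional calculus computation producing the matrix unit E₁₁. -/
theorem stmt_4 {k : ℕ} [NeZero k] (T : Matrix (Fin k) (Fin k) ℂ)
    (hT : ∀ i j : Fin k, j ≤ i → T i j = 0)
    (lam : Fin k → ℂ)
    (p : Polynomial ℂ)
    (hp1 : p.eval (lam 0) = 1)
    (hp0 : ∀ i : Fin k, i ≠ 0 → p.eval (lam i) = 0)
    (hTrow : T * Matrix.single (0 : Fin k) 0 1 = 0)
    (hTcol : Matrix.single (0 : Fin k) 0 1 * T = 0) :
    ((aeval (Matrix.diagonal lam + T) p) ^ k) 0 0 = 1 ∧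
    (∃ T' : Matrix (Fin k) (Fin k) ℂ,
      (∀ i j : Fin k, j ≤ i → T' i j = 0) ∧
      (∀ j : Fin k, T' 0 j = 0) ∧ (∀ i : Fin k, T' i 0 = 0) ∧
      aeval (Matrix.diagonal lam + T) p = Matrix.single (0 : Fin k) 0 1 + T') ∧
    (aeval (Matrix.diagonal lam + T) p) ^ k = Matrix.single (0 : Fin k) 0 1 := by
  set A : Matrix (Fin k) (Fin k) ℂ := Matrix.diagonal lam + T with hA
  set E : Matrix (Fin k) (Fin k) ℂ := Matrix.single (0 : Fin k) 0 1 with hE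
  -- first row of T vanishes
  have hTr : ∀ j : Fin k, T 0 j = 0 := by
    intro j
    rcases eq_or_ne j 0 with rfl | hj
    · exact hT 0 0 le_rfl
    · have := congrFun (congrFun hTcol 0) j
      simp only [Matrix.mul_apply, Matrix.zero_apply] at this
      rw [Finset.sum_eq_single (0 : Fin k)] at this
      · simpa [hE, Matrix.single] using this
      · intro l _ hl
        simp [hE, Matrix.single, hl.symm]
      · simp
  -- basic entries of A
  have hAtri : ∀ i j : Fin k, j < i → A i j = 0 := by
    intro i j hij
    simp [hA, Matrix.diagonal_apply_ne _ (ne_of_gt hij), hT i j hij.le]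
  have hAdiag : ∀ i : Fin k, A i i = lam i := by
    intro i; simp [hA, hT i i le_rfl]
  have hArow : ∀ j : Fin k, j ≠ 0 → A 0 j = 0 := by
    intro j hj
    simp [hA, Matrix.diagonal_apply_ne _ (Ne.symm hj), hTr j]
  have hAcol : ∀ i : Fin k, i ≠ 0 → A i 0 = 0 := by
    intro i hi
    simp [hA, Matrix.diagonal_apply_ne _ hi, hT i 0 (Fin.zero_le i)]
  -- powers of A
  have hpow : ∀ n : ℕ, (∀ i j : Fin k, j < i → (A ^ n) i j = 0) ∧
      (∀ i : Fin k, (A ^ n) i i = lam i ^ n) ∧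
      (∀ j : Fin k, j ≠ 0 → (A ^ n) 0 j = 0) ∧
      (∀ i : Fin k, i ≠ 0 → (A ^ n) i 0 = 0) := by
    intro n
    induction n with
    | zero =>
      refine ⟨fun i j hij => ?_, fun i => ?_, fun j hj => ?_, fun i hi => ?_⟩
      · rw [pow_zero]; exact Matrix.one_apply_ne (ne_of_gt hij)
      · rw [pow_zero, pow_zero, Matrix.one_apply_eq]
      · rw [pow_zero]; exact Matrix.one_apply_ne (Ne.symm hj)
      · rw [pow_zero]; exact Matrix.one_apply_ne hi
    | succ n ih =>
      obtain ⟨ih1, ih2, ih3, ih4⟩ := ih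
      refine ⟨?_, ?_, ?_, ?_⟩
      · intro i j hij
        rw [pow_succ, Matrix.mul_apply]
        apply Finset.sum_eq_zero
        intro l _
        rcases lt_or_ge l i with h | h
        · rw [ih1 i l h, zero_mul]
        · rw [hAtri l j (lt_of_lt_of_le hij h), mul_zero]
      · intro i
        rw [pow_succ, Matrix.mul_apply, Finset.sum_eq_single i]
        · rw [ih2 i, hAdiag i, pow_succ]
        · intro l _ hl
          rcases lt_or_gt_of_ne hl with h | h
          · rw [ih1 i l h, zero_mul]
          · rw [hAtri l i h, mul_zero]
        · simp
      · intro j hj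
        rw [pow_succ, Matrix.mul_apply]
        apply Finset.sum_eq_zero
        intro l _
        rcases eq_or_ne l 0 with rfl | hl
        · rw [hArow j hj, mul_zero]
        · rw [ih3 l hl, zero_mul]
      · intro i hi
        rw [pow_succ, Matrix.mul_apply]
        apply Finset.sum_eq_zero
        intro l _
        rcases eq_or_ne l 0 with rfl | hl
        · rw [ih4 i hi, zero_mul]
        · rw [hAcol l hl, mul_zero]
  set Q : Matrix (Fin k) (Fin k) ℂ := aeval A p with hQdef
  have hQ : ∀ i j : Fin k, Q i j =
      ∑ n ∈ Finset.range (p.natDegree + 1), p.coeff n * (A ^ n) i j := by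
    intro i j
    rw [hQdef, Polynomial.aeval_eq_sum_range]
    simp [Matrix.sum_apply]
  have hQtri : ∀ i j : Fin k, j < i → Q i j = 0 := by
    intro i j hij
    rw [hQ]
    apply Finset.sum_eq_zero
    intro n _
    rw [(hpow n).1 i j hij, mul_zero]
  have hQdiag : ∀ i : Fin k, Q i i = p.eval (lam i) := by
    intro i
    rw [hQ, Polynomial.eval_eq_sum_range]
    exact Finset.sum_congr rfl fun n _ => by rw [(hpow n).2.1 i]
  have hQrow : ∀ j : Fin k, j ≠ 0 → Q 0 j = 0 := by
    intro j hj
    rw [hQ]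
    apply Finset.sum_eq_zero
    intro n _
    rw [(hpow n).2.2.1 j hj, mul_zero]
  have hQcol : ∀ i : Fin k, i ≠ 0 → Q i 0 = 0 := by
    intro i hi
    rw [hQ]
    apply Finset.sum_eq_zero
    intro n _
    rw [(hpow n).2.2.2 i hi, mul_zero]
  set T' : Matrix (Fin k) (Fin k) ℂ := Q - E with hT'def
  have hE00 : ∀ i j : Fin k, E i j = if i = 0 ∧ j = 0 then 1 else 0 := by
    intro i j
    simp only [hE, Matrix.single]
    congr 1
    simp [eq_comm, and_comm, and_congr_left_iff, and_congr_right_iff]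
  have hT'tri : ∀ i j : Fin k, j ≤ i → T' i j = 0 := by
    intro i j hij
    rcases lt_or_eq_of_le hij with h | rfl
    · have hne : ¬(i = 0 ∧ j = 0) := by
        rintro ⟨rfl, rfl⟩; exact absurd h (lt_irrefl _)
      simp [hT'def, hQtri i j h, hE00, hne]
    · rcases eq_or_ne j 0 with rfl | hj
      · simp [hT'def, hQdiag, hp1, hE00]
      · simp [hT'def, hQdiag, hp0 j hj, hE00, hj]
  have hT'row : ∀ j : Fin k, T' 0 j = 0 := by
    intro j
    rcases eq_or_ne j 0 with rfl | hj
    · simp [hT'def, hQdiag, hp1, hE00]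
    · simp [hT'def, hQrow j hj, hE00, hj]
  have hT'col : ∀ i : Fin k, T' i 0 = 0 := by
    intro i
    rcases eq_or_ne i 0 with rfl | hi
    · exact hT'row 0
    · simp [hT'def, hQcol i hi, hE00, hi]
  have hQsplit : Q = E + T' := by rw [hT'def]; abel
  -- E * T' = 0 and T' * E = 0
  have hET : E * T' = 0 := by
    ext i j
    rw [Matrix.mul_apply, Matrix.zero_apply]
    apply Finset.sum_eq_zero
    intro l _
    rcases eq_or_ne l 0 with rfl | hl
    · rw [hT'row j, mul_zero]
    · rw [hE00]; simp [hl]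
  have hTE : T' * E = 0 := by
    ext i j
    rw [Matrix.mul_apply, Matrix.zero_apply]
    apply Finset.sum_eq_zero
    intro l _
    rcases eq_or_ne l 0 with rfl | hl
    · rw [hT'col i, zero_mul]
    · rw [hE00]; simp [hl]
  have hEE : E * E = E := by
    rw [hE, Matrix.single_mul_single_same, mul_one]
  -- nilpotency of T'
  have hnil : ∀ n : ℕ, ∀ i j : Fin k, (T' ^ n) i j ≠ 0 → (i : ℕ) + n ≤ (j : ℕ) := by
    intro n
    induction n with
    | zero =>
      intro i j h
      rw [pow_zero] at h
      rcases eq_or_ne i j with rfl | hij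
      · omega
      · exact absurd (Matrix.one_apply_ne hij) h
    | succ n ih =>
      intro i j h
      rw [pow_succ, Matrix.mul_apply] at h
      obtain ⟨l, _, hl⟩ := Finset.exists_ne_zero_of_sum_ne_zero h
      have h1 : (T' ^ n) i l ≠ 0 := fun h0 => hl (by rw [h0, zero_mul])
      have h2 : T' l j ≠ 0 := fun h0 => hl (by rw [h0, mul_zero])
      have hil := ih i l h1
      have hlj : (l : ℕ) < (j : ℕ) := by
        by_contra hc
        exact h2 (hT'tri l j (by rw [Fin.le_def]; omega))
      omega
  have hT'k : T' ^ k = 0 := by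
    ext i j
    rw [Matrix.zero_apply]
    by_contra h
    have := hnil k i j h
    have := j.isLt
    omega
  -- powers of Q
  have hQpow : ∀ n : ℕ, 1 ≤ n → Q ^ n = E + T' ^ n := by
    intro n hn
    induction n with
    | zero => omega
    | succ n ih =>
      rcases Nat.eq_or_lt_of_le hn with h | h
      · rw [← h, pow_one, pow_one]; exact hQsplit
      · have hn1 : 1 ≤ n := by omega
        have hTnE : T' ^ n * E = 0 := by
          obtain ⟨m, rfl⟩ := Nat.exists_eq_add_of_le hn1
          rw [add_comm, pow_succ, mul_assoc, hTE, Matrix.mul_zero]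
        rw [pow_succ, ih hn1, hQsplit, add_mul, mul_add, mul_add, hEE, hET,
          hTnE, ← pow_succ]
        abel
  have hQk : Q ^ k = E := by
    rw [hQpow k (Nat.one_le_iff_ne_zero.mpr (NeZero.ne k)), hT'k, add_zero]
  refine ⟨?_, ⟨T', hT'tri, hT'row, hT'col, hQsplit⟩, hQk⟩
  rw [hQk, hE00]
  simp
end

section
/- Let n ≥ 1, z_1,…,z_{k+1} ∈ ℂ^n with ‖z_i‖ < δ < 1, write z_i = (z_{i1},…,z_{in}). For each 1 ≤ j ≤ n and a word w = l_1…l_k in the alphabet {1,…,n}, define T_j = diag(z_{1j},…,z_{k+1,j}) + (1−δ) Σ_{i : l_i = j} E_{i,i+1} ∈ M_{k+1}(ℂ). Then the row matrix [T_1 … T_n] (as an operator from (ℂ^{k+1})^n to ℂ^{k+1}) has operator norm strictly less than 1. -/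
open Matrix Finset

private lemma aux_norm_le7 {ι : Type*} [Fintype ι] (v : EuclideanSpace ℂ ι) {C t : ℝ}
    (hC : 0 ≤ C) (ht : 0 ≤ t) (h : ∑ i, ‖v i‖ ^ 2 ≤ C ^ 2 * t ^ 2) : ‖v‖ ≤ C * t := by
  rw [EuclideanSpace.norm_eq]
  calc Real.sqrt (∑ i, ‖v i‖ ^ 2) ≤ Real.sqrt (C ^ 2 * t ^ 2) := Real.sqrt_le_sqrt h
    _ = C * t := by rw [← mul_pow, Real.sqrt_sq (by positivity)]

/-- The row matrix [T₁ … Tₙ] built from the nest representation ρ_{Z,w} is a strict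
row contraction. -/
theorem stmt_7 {n k : ℕ} (hn : 1 ≤ n) (δ : ℝ) (hδ : δ < 1)
    (z : Fin (k + 1) → EuclideanSpace ℂ (Fin n))
    (hz : ∀ i, ‖z i‖ < δ)
    (w : Fin k → Fin n)
    (T : Fin n → Matrix (Fin (k + 1)) (Fin (k + 1)) ℂ)
    (hT : ∀ j, T j = Matrix.diagonal (fun i => z i j) +
      ((1 - δ : ℝ) : ℂ) • ∑ i : Fin k,
        if w i = j then Matrix.single i.castSucc i.succ (1 : ℂ) else 0)
    (R : Matrix (Fin (k + 1)) (Fin n × Fin (k + 1)) ℂ)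
    (hR : ∀ i j, R i j = T j.1 i j.2) :
    ‖LinearMap.toContinuousLinearMap (Matrix.toEuclideanLin R)‖ < 1 := by
  have hδ0 : 0 < δ := lt_of_le_of_lt (norm_nonneg (z 0)) (hz 0)
  have h1δ : (0:ℝ) ≤ 1 - δ := by linarith
  have hne : (Finset.univ : Finset (Fin (k+1))).Nonempty := univ_nonempty
  set M : ℝ := Finset.univ.sup' hne (fun i => ‖z i‖) with hMdef
  have hM0 : 0 ≤ M := le_trans (norm_nonneg (z 0)) (Finset.le_sup' (fun i => ‖z i‖) (mem_univ (0 : Fin (k+1))))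
  have hMδ : M < δ := (Finset.sup'_lt_iff hne).2 fun i _ => hz i
  have hc1 : M + (1 - δ) < 1 := by linarith
  refine lt_of_le_of_lt (ContinuousLinearMap.opNorm_le_bound _ (by linarith) ?_) hc1
  intro x
  have hx2 : ∑ p : Fin n × Fin (k+1), ‖x p‖ ^ 2 = ‖x‖ ^ 2 := by
    rw [EuclideanSpace.norm_eq, Real.sq_sqrt (by positivity)]
  set A : EuclideanSpace ℂ (Fin (k+1)) := WithLp.toLp 2 (fun i => ∑ j, z i j * x (j, i)) with hA
  set B : EuclideanSpace ℂ (Fin (k+1)) := WithLp.toLp 2 (fun i =>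
    ((1 - δ : ℝ):ℂ) * ∑ i' : Fin k, if i = i'.castSucc then x (w i', i'.succ) else 0) with hB
  have hyAB : (LinearMap.toContinuousLinearMap (Matrix.toEuclideanLin R)) x = A + B := by
    ext i
    show (Matrix.toEuclideanLin R x) i = A i + B i
    have : (Matrix.toEuclideanLin R x) i = ∑ p : Fin n × Fin (k+1), R i p * x p := by
      simp [Matrix.toEuclideanLin_apply, Matrix.mulVec, dotProduct]
    rw [this]
    simp only [hR, hT, Matrix.add_apply, Matrix.smul_apply, Matrix.sum_apply,
      Matrix.diagonal_apply, Matrix.single, Matrix.of_apply, smul_eq_mul,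
      Fintype.sum_prod_type, add_mul, Finset.sum_add_distrib]
    congr 1
    · simp [hA, Finset.sum_comm]
    · have hBi : B i = ∑ i' : Fin k,
          if i = i'.castSucc then ((1 - δ:ℝ):ℂ) * x (w i', i'.succ) else 0 := by
        simp only [hB]
        rw [mul_sum]
        simp only [mul_ite, mul_zero]
      rw [hBi]
      have hmat : ∀ (P : Prop) [Decidable P] (M : Matrix (Fin (k+1)) (Fin (k+1)) ℂ) (a b),
          (if P then M else 0) a b = if P then M a b else 0 := by
        intros P _ M a b; split <;> rfl
      simp only [mul_sum, Finset.sum_mul]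
      conv_lhs => enter [2, y]; rw [Finset.sum_comm]
      rw [Finset.sum_comm]
      refine Finset.sum_congr rfl fun i1 _ => ?_
      simp only [hmat, Matrix.of_apply, ite_and, mul_ite, ite_mul, mul_zero, zero_mul,
        mul_one]
      refine (Finset.sum_eq_single (w i1) ?_ ?_).trans ?_
      · intro b _ hb
        apply Finset.sum_eq_zero
        intro x2 _
        have hb' : w i1 ≠ b := Ne.symm hb
        simp [hb']
      · simp
      · refine (Finset.sum_eq_single i1.succ ?_ ?_).trans ?_
        · intro b _ hb
          have hb' : i1.succ ≠ b := fun h => hb h.symm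
          simp [hb']
        · simp
        · rw [if_pos rfl]
          by_cases h : i1.castSucc = i
          · rw [if_pos h, if_pos rfl, if_pos h.symm]
          · rw [if_neg h, if_neg (fun hh : i = i1.castSucc => h hh.symm)]
  rw [hyAB]
  have hAle : ‖A‖ ≤ M * ‖x‖ := by
    apply aux_norm_le7 _ hM0 (norm_nonneg x)
    have key : ∀ i, ‖A i‖ ^ 2 ≤ M ^ 2 * ∑ j, ‖x (j, i)‖ ^ 2 := by
      intro i
      have h1 : ‖A i‖ ≤ ∑ j, ‖z i j‖ * ‖x (j, i)‖ := by
        rw [hA, PiLp.toLp_apply]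
        refine le_trans (norm_sum_le _ _) (le_of_eq ?_)
        simp
      have h2 : (∑ j, ‖z i j‖ * ‖x (j, i)‖) ^ 2 ≤
          (∑ j, ‖z i j‖ ^ 2) * ∑ j, ‖x (j, i)‖ ^ 2 :=
        Finset.sum_mul_sq_le_sq_mul_sq _ _ _
      have h3 : (∑ j, ‖z i j‖ ^ 2) = ‖z i‖ ^ 2 := by
        rw [EuclideanSpace.norm_eq, Real.sq_sqrt (by positivity)]
      have h4 : ‖z i‖ ≤ M := Finset.le_sup' (fun i => ‖z i‖) (mem_univ i)
      calc ‖A i‖ ^ 2 ≤ (∑ j, ‖z i j‖ * ‖x (j, i)‖) ^ 2 := by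
            apply pow_le_pow_left₀ (norm_nonneg _) h1
        _ ≤ (∑ j, ‖z i j‖ ^ 2) * ∑ j, ‖x (j, i)‖ ^ 2 := h2
        _ ≤ M ^ 2 * ∑ j, ‖x (j, i)‖ ^ 2 := by
            apply mul_le_mul_of_nonneg_right _ (by positivity)
            rw [h3]
            exact pow_le_pow_left₀ (norm_nonneg _) h4 2
    calc ∑ i, ‖A i‖ ^ 2 ≤ ∑ i, M ^ 2 * ∑ j, ‖x (j, i)‖ ^ 2 :=
          Finset.sum_le_sum fun i _ => key i
      _ = M ^ 2 * ∑ i : Fin (k+1), ∑ j : Fin n, ‖x (j, i)‖ ^ 2 := by rw [mul_sum]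
      _ = M ^ 2 * ‖x‖ ^ 2 := by rw [← hx2, Fintype.sum_prod_type, Finset.sum_comm]
  have hBle : ‖B‖ ≤ (1 - δ) * ‖x‖ := by
    apply aux_norm_le7 _ h1δ (norm_nonneg x)
    have hBi : ∀ i, ‖B i‖ ^ 2 = (1 - δ) ^ 2 *
        ‖∑ i' : Fin k, if i = i'.castSucc then x (w i', i'.succ) else 0‖ ^ 2 := by
      intro i
      simp only [hB]
      rw [norm_mul, mul_pow]
      congr 2
      rw [Complex.norm_real, Real.norm_eq_abs]
      exact abs_of_nonneg h1δ
    calc ∑ i, ‖B i‖ ^ 2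
        = (1 - δ) ^ 2 * ∑ i : Fin (k+1),
            ‖∑ i' : Fin k, if i = i'.castSucc then x (w i', i'.succ) else 0‖ ^ 2 := by
          rw [mul_sum]; exact Finset.sum_congr rfl fun i _ => hBi i
      _ = (1 - δ) ^ 2 * ∑ i' : Fin k, ‖x (w i', i'.succ)‖ ^ 2 := by
          congr 1
          rw [Fin.sum_univ_castSucc]
          have hlast : (∑ i' : Fin k,
              if Fin.last k = i'.castSucc then x (w i', i'.succ) else 0) = 0 := by
            apply Finset.sum_eq_zero
            intro i' _
            rw [if_neg]
            exact fun h => absurd h.symm (ne_of_lt (Fin.castSucc_lt_last i'))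
          rw [hlast]
          simp only [norm_zero, ne_eq, OfNat.ofNat_ne_zero, not_false_eq_true, zero_pow,
            add_zero]
          refine Finset.sum_congr rfl fun i₀ _ => ?_
          congr 1
          rw [Finset.sum_eq_single i₀]
          · simp
          · intro i' _ hne'
            rw [if_neg]
            exact fun h => hne' (Fin.castSucc_injective _ h.symm)
          · simp
      _ ≤ (1 - δ) ^ 2 * ‖x‖ ^ 2 := by
          apply mul_le_mul_of_nonneg_left _ (by positivity)
          rw [← hx2]
          have hinj : ∀ a ∈ (Finset.univ : Finset (Fin k)), ∀ b ∈ Finset.univ,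
              (fun i' => (w i', i'.succ)) a = (fun i' => (w i', i'.succ)) b → a = b := by
            intro a _ b _ h
            exact Fin.succ_injective _ (congrArg Prod.snd h)
          calc ∑ i' : Fin k, ‖x (w i', i'.succ)‖ ^ 2
              = ∑ p ∈ Finset.univ.image (fun i' : Fin k => (w i', i'.succ)), ‖x p‖ ^ 2 :=
                (Finset.sum_image (f := fun p => ‖x p‖ ^ 2) hinj).symm
            _ ≤ ∑ p : Fin n × Fin (k+1), ‖x p‖ ^ 2 :=
                Finset.sum_le_sum_of_subset_of_nonneg (Finset.subset_univ _)
                  fun _ _ _ => by positivity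
  calc ‖A + B‖ ≤ ‖A‖ + ‖B‖ := norm_add_le _ _
    _ ≤ M * ‖x‖ + (1 - δ) * ‖x‖ := add_le_add hAle hBle
    _ = (M + (1 - δ)) * ‖x‖ := by ring
end

section
/- With the notation of the construction ρ_{Z,w} (T_j = diag(z_{ij})_{i=1}^{k+1} + (1−δ)Σ_{l_i=j}E_{i,i+1} in M_{k+1}(ℂ) for a fixed word w = l_1…l_k), for the word w itself the (1, k+1)-entry of the product T_{l_1} T_{l_2} ⋯ T_{l_k} equals (1−δ)^k plus a polynomial in the coordinates z_{ij} with zero constant term; in particular when all z_i = 0 this entry equals (1−δ)^k. -/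
open Matrix

lemma aux_entry {n k : ℕ} (c : ℂ) (w : Fin k → Fin n)
    (M : Fin n → Matrix (Fin (k+1)) (Fin (k+1)) ℂ)
    (hM : ∀ j, M j = c • ∑ i : Fin k,
      if w i = j then Matrix.single i.castSucc i.succ (1:ℂ) else 0) :
    ∀ (m : ℕ) (h : m ≤ k),
      ((List.ofFn fun i : Fin m => M (w ⟨i, lt_of_lt_of_le i.2 h⟩)).prod)
        0 ⟨m, Nat.lt_succ_of_le h⟩ = c ^ m := by
  intro m
  induction m with
  | zero =>
    intro h
    simp [Matrix.one_apply]
  | succ m ih =>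
    intro h
    have hm : m ≤ k := Nat.le_of_succ_le h
    have hmk : m < k := h
    rw [List.ofFn_succ', List.prod_concat, Matrix.mul_apply]
    have hcol : ∀ t : Fin (k+1),
        (M (w ⟨m, hmk⟩)) t ⟨m+1, Nat.lt_succ_of_le h⟩ =
          if t = (⟨m, Nat.lt_succ_of_le hm⟩ : Fin (k+1)) then c else 0 := by
      intro t
      rw [hM]
      rw [Matrix.smul_apply, Matrix.sum_apply]
      have key : ∀ i : Fin k,
          (if w i = w ⟨m, hmk⟩ then Matrix.single i.castSucc i.succ (1:ℂ) else 0) t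
            ⟨m+1, Nat.lt_succ_of_le h⟩ =
          if i = (⟨m, hmk⟩ : Fin k) ∧ t = (⟨m, Nat.lt_succ_of_le hm⟩ : Fin (k+1)) then 1 else 0 := by
        intro i
        by_cases hw : w i = w ⟨m, hmk⟩
        · rw [if_pos hw]
          simp only [Matrix.single, Matrix.of_apply]
          have hiff : (i.castSucc = t ∧ i.succ = (⟨m+1, Nat.lt_succ_of_le h⟩ : Fin (k+1)))
              ↔ (i = (⟨m, hmk⟩ : Fin k) ∧ t = (⟨m, Nat.lt_succ_of_le hm⟩ : Fin (k+1))) := by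
            simp only [Fin.ext_iff, Fin.coe_castSucc, Fin.val_succ]
            omega
          rw [if_congr hiff rfl rfl]
        · rw [if_neg hw, Matrix.zero_apply]
          rw [if_neg]
          rintro ⟨h1, h2⟩
          subst h1
          exact hw rfl
      rw [Finset.sum_congr rfl (fun i _ => key i)]
      by_cases ht : t = (⟨m, Nat.lt_succ_of_le hm⟩ : Fin (k+1))
      · subst ht
        simp
      · simp [ht]
    have hl : (List.ofFn fun i : Fin m =>
        M (w ⟨(i.castSucc : Fin (m+1)), lt_of_lt_of_le (i.castSucc).2 h⟩)) =
        (List.ofFn fun i : Fin m => M (w ⟨i, lt_of_lt_of_le i.2 hm⟩)) := rfl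
    calc ∑ t, ((List.ofFn fun i : Fin m =>
            M (w ⟨(i.castSucc : Fin (m+1)), lt_of_lt_of_le (i.castSucc).2 h⟩)).prod) 0 t *
          (M (w ⟨(Fin.last m : Fin (m+1)), lt_of_lt_of_le (Fin.last m).2 h⟩)) t ⟨m+1, Nat.lt_succ_of_le h⟩
        = ∑ t, ((List.ofFn fun i : Fin m => M (w ⟨i, lt_of_lt_of_le i.2 hm⟩)).prod) 0 t *
            (if t = (⟨m, Nat.lt_succ_of_le hm⟩ : Fin (k+1)) then c else 0) := by
          rw [hl]
          refine Finset.sum_congr rfl fun t _ => ?_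
          congr 1
          exact hcol t
      _ = c ^ (m+1) := by
          simp only [mul_ite, mul_zero]
          rw [Finset.sum_ite_eq' Finset.univ]
          simp [ih hm, pow_succ]

/-- The (1, k+1)-entry of ρ_{Z,w}(S_w) is (1−δ)^k plus a polynomial in the coordinates
z_{ij} with zero constant term; in particular it is (1−δ)^k at z = 0. -/
theorem stmt_8 {n k : ℕ} (δ : ℝ) (hδ0 : 0 ≤ δ) (hδ : δ < 1)
    (w : Fin k → Fin n)
    (T : (Fin (k + 1) → EuclideanSpace ℂ (Fin n)) → Fin n →
      Matrix (Fin (k + 1)) (Fin (k + 1)) ℂ)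
    (hT : ∀ z j, T z j = Matrix.diagonal (fun i => z i j) +
      ((1 - δ : ℝ) : ℂ) • ∑ i : Fin k,
        if w i = j then Matrix.single i.castSucc i.succ (1 : ℂ) else 0) :
    ∃ P : MvPolynomial (Fin (k + 1) × Fin n) ℂ,
      MvPolynomial.coeff 0 P = 0 ∧
      ∀ z : Fin (k + 1) → EuclideanSpace ℂ (Fin n), (∀ i, ‖z i‖ < δ) →
        ((List.ofFn fun i : Fin k => T z (w i)).prod) 0 (Fin.last k) =
          ((1 - δ : ℝ) : ℂ) ^ k + MvPolynomial.eval (fun q => z q.1 q.2) P := by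
  set c : ℂ := ((1 - δ : ℝ) : ℂ) with hc
  set R := MvPolynomial (Fin (k + 1) × Fin n) ℂ with hR
  set A : Fin n → Matrix (Fin (k + 1)) (Fin (k + 1)) R := fun j =>
    Matrix.diagonal (fun i => MvPolynomial.X (i, j)) +
      MvPolynomial.C (σ := Fin (k + 1) × Fin n) c • ∑ i : Fin k,
        if w i = j then Matrix.single i.castSucc i.succ (1 : R) else 0 with hA
  set Q : R := ((List.ofFn fun i : Fin k => A (w i)).prod) 0 (Fin.last k) with hQ
  refine ⟨Q - MvPolynomial.C (c ^ k), ?_, ?_⟩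
  · -- constant coefficient
    have hφ : ∀ j, (A j).map (MvPolynomial.constantCoeff (σ := Fin (k + 1) × Fin n) (R := ℂ)) =
        c • ∑ i : Fin k, if w i = j then Matrix.single i.castSucc i.succ (1 : ℂ) else 0 := by
      intro j
      ext a b
      simp [hA, Matrix.map_apply, Matrix.diagonal, Matrix.add_apply, Matrix.smul_apply,
        Matrix.sum_apply, Matrix.single, Matrix.of_apply, smul_eq_mul,
        apply_ite (fun M : Matrix (Fin (k + 1)) (Fin (k + 1)) R => M a b),
        apply_ite (fun M : Matrix (Fin (k + 1)) (Fin (k + 1)) ℂ => M a b),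
        apply_ite (MvPolynomial.constantCoeff (σ := Fin (k + 1) × Fin n) (R := ℂ))]
    have key : MvPolynomial.constantCoeff Q = c ^ k := by
      have h1 : MvPolynomial.constantCoeff Q =
          (((List.ofFn fun i : Fin k => A (w i)).prod).map
            (MvPolynomial.constantCoeff (σ := Fin (k + 1) × Fin n) (R := ℂ))) 0 (Fin.last k) := rfl
      rw [h1]
      have h2 : ((List.ofFn fun i : Fin k => A (w i)).prod).map
            (MvPolynomial.constantCoeff (σ := Fin (k + 1) × Fin n) (R := ℂ)) =
          (List.ofFn fun i : Fin k => (A (w i)).map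
            (MvPolynomial.constantCoeff (σ := Fin (k + 1) × Fin n) (R := ℂ))).prod := by
        rw [← RingHom.mapMatrix_apply, map_list_prod, List.map_ofFn]
        rfl
      rw [h2]
      have h3 := aux_entry c w
        (fun j => c • ∑ i : Fin k, if w i = j then Matrix.single i.castSucc i.succ (1 : ℂ) else 0)
        (fun j => rfl) k le_rfl
      simp only [hφ]
      exact h3
    have h4 : MvPolynomial.coeff 0 (Q - MvPolynomial.C (c ^ k)) =
        MvPolynomial.coeff 0 Q - c ^ k := by
      rw [MvPolynomial.coeff_sub, MvPolynomial.coeff_zero_C]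
    have h5 : MvPolynomial.coeff 0 Q = MvPolynomial.constantCoeff Q := rfl
    rw [h4, h5, key, sub_self]
  · intro z hz
    set ψ := (MvPolynomial.eval (fun q : Fin (k + 1) × Fin n => z q.1 q.2) :
      R →+* ℂ) with hψ
    have hφ : ∀ j, (A j).map ψ = T z j := by
      intro j
      rw [hT]
      ext a b
      simp [hA, hψ, Matrix.map_apply, Matrix.diagonal, Matrix.add_apply, Matrix.smul_apply,
        Matrix.sum_apply, Matrix.single, Matrix.of_apply, smul_eq_mul,
        apply_ite (fun M : Matrix (Fin (k + 1)) (Fin (k + 1)) R => M a b),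
        apply_ite (fun M : Matrix (Fin (k + 1)) (Fin (k + 1)) ℂ => M a b), apply_ite ψ,
        apply_ite (MvPolynomial.eval fun q : Fin (k + 1) × Fin n => z q.1 q.2)]
    have key : ψ Q = ((List.ofFn fun i : Fin k => T z (w i)).prod) 0 (Fin.last k) := by
      have h1 : ψ Q = (((List.ofFn fun i : Fin k => A (w i)).prod).map ψ) 0 (Fin.last k) := rfl
      rw [h1]
      have h2 : ((List.ofFn fun i : Fin k => A (w i)).prod).map ψ =
          (List.ofFn fun i : Fin k => (A (w i)).map ψ).prod := by
        rw [← RingHom.mapMatrix_apply, map_list_prod, List.map_ofFn]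
        rfl
      rw [h2]
      simp only [hφ]
    rw [map_sub, key, MvPolynomial.eval_C]
    ring
end

section
/- With the same notation, if v is a word of length |v| < k, or |v| = k with v ≠ w, then the (1, k+1)-entry of T_{v_1}⋯T_{v_{|v|}} is 0. -/
open Matrix

section Aux

variable {n k : ℕ} (δ : ℝ)
    (z : Fin (k + 1) → EuclideanSpace ℂ (Fin n))
    (w : List (Fin n))
    (T : Fin n → Matrix (Fin (k + 1)) (Fin (k + 1)) ℂ)
    (hT : ∀ j, T j = Matrix.diagonal (fun i => z i j) +
      ((1 - δ : ℝ) : ℂ) • Matrix.of (fun i i' : Fin (k + 1) =>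
        if (i' : ℕ) = (i : ℕ) + 1 ∧ w[(i : ℕ)]? = some j then 1 else 0))

include hT in
lemma aux_entry_s9 (j : Fin n) (a c : Fin (k + 1)) :
    T j a c = (if a = c then z a j else 0) +
      ((1 - δ : ℝ) : ℂ) * (if (c : ℕ) = (a : ℕ) + 1 ∧ w[(a : ℕ)]? = some j
        then 1 else 0) := by
  rw [hT]
  simp [Matrix.add_apply, Matrix.diagonal_apply, Matrix.smul_apply, Matrix.of_apply,
    smul_eq_mul]

include hT in
lemma aux_far (v : List (Fin n)) : ∀ a b : Fin (k + 1), (a : ℕ) + v.length < (b : ℕ) →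
    ((v.map T).prod) a b = 0 := by
  induction v with
  | nil =>
      intro a b hab
      have : a ≠ b := by
        intro h; subst h; simp at hab
      simp [Matrix.one_apply, this]
  | cons j v ih =>
      intro a b hab
      rw [List.map_cons, List.prod_cons, Matrix.mul_apply]
      refine Finset.sum_eq_zero fun c _ => ?_
      by_cases hc : (c : ℕ) ≤ (a : ℕ) + 1
      · have : (c : ℕ) + v.length < (b : ℕ) := by
          simp only [List.length_cons] at hab; omega
        rw [ih c b this, mul_zero]
      · have h1 : a ≠ c := by intro h; subst h; omega
        have h2 : ¬((c : ℕ) = (a : ℕ) + 1 ∧ w[(a : ℕ)]? = some j) := by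
          rintro ⟨h, -⟩; omega
        rw [aux_entry_s9 δ z w T hT, if_neg h1, if_neg h2, mul_zero, add_zero, zero_mul]

include hT in
lemma aux_exact (v : List (Fin n)) : ∀ a b : Fin (k + 1), (a : ℕ) + v.length = (b : ℕ) →
    v ≠ (w.drop (a : ℕ)).take v.length → ((v.map T).prod) a b = 0 := by
  induction v with
  | nil =>
      intro a b _ hne
      simp at hne
  | cons j v ih =>
      intro a b hab hne
      rw [List.map_cons, List.prod_cons, Matrix.mul_apply]
      refine Finset.sum_eq_zero fun c _ => ?_
      rw [aux_entry_s9 δ z w T hT]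
      by_cases hc1 : a = c
      · subst hc1
        have : (a : ℕ) + v.length < (b : ℕ) := by
          simp only [List.length_cons] at hab; omega
        rw [aux_far δ z w T hT v a b this, mul_zero]
      · by_cases hc2 : (c : ℕ) = (a : ℕ) + 1 ∧ w[(a : ℕ)]? = some j
        · obtain ⟨hc2, hwj⟩ := hc2
          -- w.get? a = some j, so drop a = j :: drop (a+1)
          have hlen : (a : ℕ) < w.length := by
            by_contra h
            rw [List.getElem?_eq_none_iff.2 (le_of_not_gt h)] at hwj
            exact Option.noConfusion rfl (heq_of_eq hwj)
          have hget : w.get ⟨(a : ℕ), hlen⟩ = j := by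
            have := List.getElem?_eq_getElem hlen
            rw [this] at hwj
            exact Option.some.inj hwj
          have hdrop : w.drop (a : ℕ) = j :: w.drop ((a : ℕ) + 1) := by
            rw [List.drop_eq_getElem_cons hlen, ← hget]; rfl
          have hv : v ≠ (w.drop ((a : ℕ) + 1)).take v.length := by
            intro h
            apply hne
            rw [hdrop]
            simp only [List.length_cons, List.take_succ_cons]
            rw [← h]
          have hb : (c : ℕ) + v.length = (b : ℕ) := by
            simp only [List.length_cons] at hab; omega
          rw [← hc2] at hv
          rw [ih c b hb hv, mul_zero]
        · rw [if_neg hc1, if_neg hc2, mul_zero, add_zero, zero_mul]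

end Aux

/-- Vanishing part of Lemma 4.2: for a word v with |v| < k, or |v| = k and v ≠ w, the
(1, k+1)-entry of the corresponding product of the matrices T_j is zero. -/
theorem stmt_9 {n k : ℕ} (δ : ℝ) (hδ0 : 0 ≤ δ) (hδ : δ < 1)
    (z : Fin (k + 1) → EuclideanSpace ℂ (Fin n)) (hz : ∀ i, ‖z i‖ < δ)
    (w : List (Fin n)) (hw : w.length = k)
    (T : Fin n → Matrix (Fin (k + 1)) (Fin (k + 1)) ℂ)
    (hT : ∀ j, T j = Matrix.diagonal (fun i => z i j) +
      ((1 - δ : ℝ) : ℂ) • Matrix.of (fun i i' : Fin (k + 1) =>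
        if (i' : ℕ) = (i : ℕ) + 1 ∧ w[(i : ℕ)]? = some j then 1 else 0))
    (v : List (Fin n))
    (hv : v.length < k ∨ (v.length = k ∧ v ≠ w)) :
    ((v.map T).prod) 0 (Fin.last k) = 0 := by
  rcases hv with h | ⟨h1, h2⟩
  · exact aux_far δ z w T hT v 0 (Fin.last k) (by simpa using h)
  · refine aux_exact δ z w T hT v 0 (Fin.last k) (by simpa using h1) ?_
    simpa [h1, ← hw] using h2
end
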